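/- arXiv:1801.06864 — 2 statements merged into one kernel-verified Lean document; each statement's English description precedes it below -/
import Mathlib

section
/- Suppose J ∈ ℝ^{m×n}, λ > 0, ρ > 0, and A ∈ ℝ^{r×n} has full row rank (rank A = r). Then P = ρ A (JᵀJ + λI + ρ AᵀA)⁻¹ Aᵀ is symmetric positive definite with all eigenvalues in (0,1), and consequently ‖I − 2P‖ < 1 in spectral norm. -/
open Matrix
open scoped Matrix.Norms.L2Operator

private lemma dot_self_pos {k : ℕ} {v : Fin k → ℝ} (hv : v ≠ 0) : 0 < v ⬝ᵥ v := by
  simpa using Matrix.dotProduct_star_self_pos_iff (v := v) |>.mpr hv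

private lemma exists_eigvec {k : ℕ} {M : Matrix (Fin k) (Fin k) ℝ} {σ : ℝ}
    (h : σ ∈ spectrum ℝ M) : ∃ v : Fin k → ℝ, v ≠ 0 ∧ M *ᵥ v = σ • v := by
  have h' : ¬IsUnit (algebraMap ℝ (Matrix (Fin k) (Fin k) ℝ) σ - M) := spectrum.mem_iff.mp h
  rw [Matrix.isUnit_iff_isUnit_det, isUnit_iff_ne_zero, not_not] at h'
  obtain ⟨v, hv, hveq⟩ := (Matrix.exists_mulVec_eq_zero_iff).mpr h'
  refine ⟨v, hv, ?_⟩
  rw [sub_mulVec, Algebra.algebraMap_eq_smul_one, smul_mulVec, one_mulVec,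
    sub_eq_zero] at hveq
  exact hveq.symm

private lemma eig_pos {k : ℕ} {M : Matrix (Fin k) (Fin k) ℝ} (hM : M.PosDef)
    {σ : ℝ} {v : Fin k → ℝ} (hv : v ≠ 0) (he : M *ᵥ v = σ • v) : 0 < σ := by
  have h1 := hM.dotProduct_mulVec_pos hv
  rw [he] at h1
  have h2 : (0:ℝ) < σ * (v ⬝ᵥ v) := by simpa [dotProduct_smul] using h1
  have h3 := dot_self_pos hv
  nlinarith

private lemma diag_l2_norm_le {k : ℕ} (d : Fin k → ℝ) {c : ℝ} (hc : 0 ≤ c)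
    (h : ∀ i, |d i| ≤ c) : ‖(Matrix.diagonal d : Matrix (Fin k) (Fin k) ℝ)‖ ≤ c := by
  rw [Matrix.l2_opNorm_def]
  refine ContinuousLinearMap.opNorm_le_bound _ hc fun x => ?_
  set y : EuclideanSpace ℝ (Fin k) := (Matrix.toEuclideanLin (Matrix.diagonal d)) x with hy
  have hyi : ∀ i, y i = d i * x i := by
    intro i
    simp [hy, Matrix.toEuclideanLin_apply, Matrix.mulVec_diagonal]
  have hnx : ‖x‖ = Real.sqrt (∑ i, ‖x i‖ ^ 2) := EuclideanSpace.norm_eq x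
  have hny : ‖y‖ = Real.sqrt (∑ i, ‖y i‖ ^ 2) := EuclideanSpace.norm_eq y
  show ‖y‖ ≤ c * ‖x‖
  rw [hnx, hny]
  have hle : (∑ i, ‖y i‖ ^ 2) ≤ c ^ 2 * ∑ i, ‖x i‖ ^ 2 := by
    rw [Finset.mul_sum]
    refine Finset.sum_le_sum fun i _ => ?_
    rw [hyi i, Real.norm_eq_abs, abs_mul, Real.norm_eq_abs]
    calc (|d i| * |x i|) ^ 2 ≤ (c * |x i|) ^ 2 := by
          have := mul_le_mul_of_nonneg_right (h i) (abs_nonneg (x i))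
          have h0 : 0 ≤ |d i| * |x i| := mul_nonneg (abs_nonneg _) (abs_nonneg _)
          nlinarith
      _ = c ^ 2 * |x i| ^ 2 := by ring
  calc Real.sqrt (∑ i, ‖y i‖ ^ 2) ≤ Real.sqrt (c ^ 2 * ∑ i, ‖x i‖ ^ 2) :=
        Real.sqrt_le_sqrt hle
    _ = c * Real.sqrt (∑ i, ‖x i‖ ^ 2) := by
        rw [Real.sqrt_mul (sq_nonneg c), Real.sqrt_sq hc]

/-- For full row-rank `A`, `λ, ρ > 0`, the matrix
`P = ρ A (JᵀJ + λI + ρAᵀA)⁻¹ Aᵀ` is symmetric positive definite with all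
eigenvalues in `(0,1)`, and consequently `‖I − 2P‖ < 1`. -/
theorem P_posDef_and_contraction {m n r : ℕ} (J : Matrix (Fin m) (Fin n) ℝ)
    (A : Matrix (Fin r) (Fin n) ℝ) (hA : A.rank = r) (l ρ : ℝ)
    (hl : 0 < l) (hρ : 0 < ρ)
    (P : Matrix (Fin r) (Fin r) ℝ)
    (hP : P = ρ • (A * (Jᵀ * J + l • (1 : Matrix (Fin n) (Fin n) ℝ) + ρ • (Aᵀ * A))⁻¹ * Aᵀ)) :
    P.PosDef ∧ (∀ σ ∈ spectrum ℝ P, σ ∈ Set.Ioo (0 : ℝ) 1) ∧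
      ‖(1 : Matrix (Fin r) (Fin r) ℝ) - 2 • P‖ < 1 := by
  set M : Matrix (Fin n) (Fin n) ℝ :=
    Jᵀ * J + l • (1 : Matrix (Fin n) (Fin n) ℝ) + ρ • (Aᵀ * A) with hM_def
  have hJt : Jᴴ = Jᵀ := Matrix.conjTranspose_eq_transpose_of_trivial J
  have hAt : Aᴴ = Aᵀ := Matrix.conjTranspose_eq_transpose_of_trivial A
  -- M is positive definite
  have h1 : (Jᵀ * J).PosSemidef := by
    rw [← hJt]; exact Matrix.posSemidef_conjTranspose_mul_self J
  have h2 : (l • (1 : Matrix (Fin n) (Fin n) ℝ)).PosDef := by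
    refine Matrix.PosDef.of_dotProduct_mulVec_pos ?_ (fun x hx => ?_)
    · show (l • (1 : Matrix (Fin n) (Fin n) ℝ))ᴴ = l • 1
      simp
    · have hq : star x ⬝ᵥ (l • (1 : Matrix (Fin n) (Fin n) ℝ)) *ᵥ x = l * (x ⬝ᵥ x) := by
        simp [smul_mulVec, one_mulVec, dotProduct_smul]
      rw [hq]
      exact mul_pos hl (dot_self_pos hx)
  have h3' : (Aᵀ * A).PosSemidef := by
    rw [← hAt]; exact Matrix.posSemidef_conjTranspose_mul_self A
  have h3 : (ρ • (Aᵀ * A)).PosSemidef := by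
    refine Matrix.PosSemidef.of_dotProduct_mulVec_nonneg ?_ (fun x => ?_)
    · show (ρ • (Aᵀ * A))ᴴ = ρ • (Aᵀ * A)
      rw [Matrix.conjTranspose_smul]
      simp [h3'.1.eq]
    · have hq : star x ⬝ᵥ (ρ • (Aᵀ * A)) *ᵥ x = ρ * (star x ⬝ᵥ (Aᵀ * A) *ᵥ x) := by
        rw [smul_mulVec, dotProduct_smul, smul_eq_mul]
      rw [hq]
      exact mul_nonneg hρ.le (h3'.dotProduct_mulVec_nonneg x)
  have hM : M.PosDef := (Matrix.PosDef.posSemidef_add h1 h2).add_posSemidef h3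
  have hMinv : M⁻¹.PosDef := hM.inv
  -- A transposed is injective
  have hker : ∀ v : Fin r → ℝ, Aᵀ *ᵥ v = 0 → v = 0 := by
    have hrank : Aᵀ.rank = r := by rw [Matrix.rank_transpose]; exact hA
    have hrn := LinearMap.finrank_range_add_finrank_ker (Aᵀ.mulVecLin)
    have hdom : Module.finrank ℝ (Fin r → ℝ) = r := by simp
    rw [hdom] at hrn
    have hrange : Module.finrank ℝ (LinearMap.range Aᵀ.mulVecLin) = r := hrank
    have hker0 : Module.finrank ℝ (LinearMap.ker Aᵀ.mulVecLin) = 0 := by omega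
    have hbot : LinearMap.ker Aᵀ.mulVecLin = ⊥ := Submodule.finrank_eq_zero.mp hker0
    intro v hv
    have : v ∈ LinearMap.ker Aᵀ.mulVecLin := hv
    rwa [hbot, Submodule.mem_bot] at this
  have hAv : ∀ v : Fin r → ℝ, v ≠ 0 → Aᵀ *ᵥ v ≠ 0 := fun v hv h => hv (hker v h)
  -- quadratic form identity
  have hquad : ∀ v : Fin r → ℝ,
      v ⬝ᵥ (A * M⁻¹ * Aᵀ) *ᵥ v = (Aᵀ *ᵥ v) ⬝ᵥ M⁻¹ *ᵥ (Aᵀ *ᵥ v) := by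
    intro v
    rw [← Matrix.mulVec_mulVec, ← Matrix.mulVec_mulVec, Matrix.dotProduct_mulVec,
      ← Matrix.mulVec_transpose]
  -- P is positive definite
  have hMit : M⁻¹ᵀ = M⁻¹ := by
    rw [← Matrix.conjTranspose_eq_transpose_of_trivial]; exact hMinv.1
  have hPherm : P.IsHermitian := by
    show Pᴴ = P
    rw [hP, Matrix.conjTranspose_eq_transpose_of_trivial, Matrix.transpose_smul,
      Matrix.transpose_mul, Matrix.transpose_mul, Matrix.transpose_transpose, hMit,
      Matrix.mul_assoc]
  have hPd : P.PosDef := by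
    refine Matrix.PosDef.of_dotProduct_mulVec_pos hPherm (fun x hx => ?_)
    have hq : star x ⬝ᵥ P *ᵥ x = ρ * ((Aᵀ *ᵥ x) ⬝ᵥ M⁻¹ *ᵥ (Aᵀ *ᵥ x)) := by
      rw [hP, smul_mulVec, dotProduct_smul, smul_eq_mul, star_trivial, hquad]
    rw [hq]
    have := hMinv.dotProduct_mulVec_pos (hAv x hx)
    rw [star_trivial] at this
    exact mul_pos hρ this
  -- 1 - P is positive definite
  have hdetM : M.det ≠ 0 := hM.det_pos.ne'
  have h1P : ((1 : Matrix (Fin r) (Fin r) ℝ) - P).PosDef := by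
    refine Matrix.PosDef.of_dotProduct_mulVec_pos ?_ (fun v hv => ?_)
    · show ((1 : Matrix (Fin r) (Fin r) ℝ) - P)ᴴ = 1 - P
      rw [Matrix.conjTranspose_sub, Matrix.conjTranspose_one, hPherm.eq]
    · set w : Fin n → ℝ := Aᵀ *ᵥ v with hw
      set u : Fin n → ℝ := M⁻¹ *ᵥ w with hu
      set s : ℝ := w ⬝ᵥ u with hs
      have hMu : M *ᵥ u = w := by
        rw [hu, Matrix.mulVec_mulVec, Matrix.mul_nonsing_inv M (isUnit_iff_ne_zero.mpr hdetM), Matrix.one_mulVec]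
      have hquadP : star v ⬝ᵥ P *ᵥ v = ρ * s := by
        rw [hP, smul_mulVec, dotProduct_smul, smul_eq_mul, star_trivial, hquad]
      have hgoal_eq : star v ⬝ᵥ ((1 : Matrix (Fin r) (Fin r) ℝ) - P) *ᵥ v
          = v ⬝ᵥ v - ρ * s := by
        rw [Matrix.sub_mulVec, dotProduct_sub, Matrix.one_mulVec, hquadP, star_trivial]
      rw [hgoal_eq]
      have hvv : 0 < v ⬝ᵥ v := dot_self_pos hv
      have hs_nonneg : 0 ≤ s := by
        have := hMinv.posSemidef.dotProduct_mulVec_nonneg w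
        rwa [star_trivial] at this
      rcases eq_or_lt_of_le hs_nonneg with hs0 | hspos
      · rw [← hs0]; simpa using hvv
      · -- s > 0
        have hu0 : u ≠ 0 := by
          intro h0
          have hz : s = 0 := by rw [hs, h0, dotProduct_zero]
          rw [hz] at hspos
          exact lt_irrefl _ hspos
        -- s = u ⬝ᵥ M *ᵥ u
        have hsMu : s = u ⬝ᵥ M *ᵥ u := by
          rw [hs, ← hMu, dotProduct_comm]
        -- expand u ⬝ᵥ M *ᵥ u
        have hJq : u ⬝ᵥ (Jᵀ * J) *ᵥ u = (J *ᵥ u) ⬝ᵥ (J *ᵥ u) := by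
          rw [← Matrix.mulVec_mulVec, Matrix.dotProduct_mulVec, ← Matrix.mulVec_transpose,
            Matrix.transpose_transpose]
        have hAq : u ⬝ᵥ (Aᵀ * A) *ᵥ u = (A *ᵥ u) ⬝ᵥ (A *ᵥ u) := by
          rw [← Matrix.mulVec_mulVec, Matrix.dotProduct_mulVec, ← Matrix.mulVec_transpose,
            Matrix.transpose_transpose]
        have hexpand : u ⬝ᵥ M *ᵥ u
            = (J *ᵥ u) ⬝ᵥ (J *ᵥ u) + l * (u ⬝ᵥ u) + ρ * ((A *ᵥ u) ⬝ᵥ (A *ᵥ u)) := by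
          rw [hM_def, Matrix.add_mulVec, Matrix.add_mulVec, dotProduct_add, dotProduct_add,
            smul_mulVec, smul_mulVec, Matrix.one_mulVec, dotProduct_smul,
            dotProduct_smul, smul_eq_mul, smul_eq_mul, hJq, hAq]
        set t : ℝ := (A *ᵥ u) ⬝ᵥ (A *ᵥ u) with ht
        have hJnn : 0 ≤ (J *ᵥ u) ⬝ᵥ (J *ᵥ u) := by
          simpa using dotProduct_star_self_nonneg (J *ᵥ u)
        have huu : 0 < u ⬝ᵥ u := dot_self_pos hu0
        have hts : ρ * t < s := by
          rw [hsMu, hexpand]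
          nlinarith
        -- s = v ⬝ᵥ (A *ᵥ u)
        have hsv : s = v ⬝ᵥ (A *ᵥ u) := by
          rw [hs, hw, Matrix.mulVec_transpose, ← Matrix.dotProduct_mulVec]
        -- Cauchy-Schwarz
        have hcs : (v ⬝ᵥ (A *ᵥ u)) ^ 2 ≤ (v ⬝ᵥ v) * t := by
          have h := Finset.sum_mul_sq_le_sq_mul_sq Finset.univ v (A *ᵥ u)
          simpa [dotProduct, ht, sq] using h
        have htnn : 0 ≤ t := by
          simpa using dotProduct_star_self_nonneg (A *ᵥ u)
        rw [← hsv] at hcs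
        nlinarith
  -- Part 2: spectrum in (0,1)
  have hspec : ∀ σ ∈ spectrum ℝ P, σ ∈ Set.Ioo (0 : ℝ) 1 := by
    intro σ hσ
    obtain ⟨v, hv, hev⟩ := exists_eigvec hσ
    have hpos : 0 < σ := eig_pos hPd hv hev
    have hev2 : ((1 : Matrix (Fin r) (Fin r) ℝ) - P) *ᵥ v = (1 - σ) • v := by
      rw [Matrix.sub_mulVec, Matrix.one_mulVec, hev, sub_smul, one_smul]
    have hlt : 0 < 1 - σ := eig_pos h1P hv hev2
    exact ⟨hpos, by linarith⟩
  refine ⟨hPd, hspec, ?_⟩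
  -- Part 3: norm bound
  have hH : P.IsHermitian := hPd.1
  set μ : Fin r → ℝ := hH.eigenvalues with hμ
  set U := hH.eigenvectorUnitary with hU
  set d : Fin r → ℝ := fun i => 1 - 2 * μ i with hd
  have hμmem : ∀ i, μ i ∈ Set.Ioo (0 : ℝ) 1 :=
    fun i => hspec (μ i) (hH.eigenvalues_mem_spectrum_real i)
  have hdlt : ∀ i, |d i| < 1 := by
    intro i
    have := hμmem i
    rw [Set.mem_Ioo] at this
    have hdi : d i = 1 - 2 * μ i := rfl
    rw [hdi, abs_lt]
    constructor <;> linarith [this.1, this.2]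
  -- spectral decomposition
  have hPdecomp : P = (U : Matrix (Fin r) (Fin r) ℝ) * Matrix.diagonal μ
      * star (U : Matrix (Fin r) (Fin r) ℝ) := by
    have := hH.spectral_theorem
    simpa using this
  have hUU : (U : Matrix (Fin r) (Fin r) ℝ) * star (U : Matrix (Fin r) (Fin r) ℝ) = 1 :=
    Matrix.mem_unitaryGroup_iff.mp U.2
  have hQdecomp : (1 : Matrix (Fin r) (Fin r) ℝ) - 2 • P
      = (U : Matrix (Fin r) (Fin r) ℝ) * Matrix.diagonal d
        * star (U : Matrix (Fin r) (Fin r) ℝ) := by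
    have hdiag : Matrix.diagonal d
        = 1 - 2 • Matrix.diagonal μ := by
      ext i j
      by_cases hij : i = j <;> simp [hd, Matrix.diagonal, hij, Matrix.one_apply]
    rw [hdiag, Matrix.mul_sub, Matrix.sub_mul, Matrix.mul_one, hUU, hPdecomp]
    congr 1
    rw [Matrix.mul_smul, Matrix.smul_mul]
  -- compute norm
  have hnorm_eq : ‖(1 : Matrix (Fin r) (Fin r) ℝ) - 2 • P‖ = ‖Matrix.diagonal d‖ := by
    rw [hQdecomp, ← Unitary.coe_star, CStarRing.norm_mul_coe_unitary,
      CStarRing.norm_coe_unitary_mul]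
  rw [hnorm_eq]
  -- bound the diagonal norm
  rcases Nat.eq_zero_or_pos r with hr | hr
  · subst hr
    have : (Matrix.diagonal d : Matrix (Fin 0) (Fin 0) ℝ) = 0 := by
      ext i; exact absurd i.2 (by omega)
    rw [this, norm_zero]; norm_num
  · have : Nonempty (Fin r) := ⟨⟨0, hr⟩⟩
    set c : ℝ := Finset.univ.sup' Finset.univ_nonempty (fun i => |d i|) with hc
    have hc_lt : c < 1 := by
      rw [hc, Finset.sup'_lt_iff]
      exact fun i _ => hdlt i
    have hc_nonneg : 0 ≤ c := by
      obtain ⟨i⟩ := ‹Nonempty (Fin r)›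
      exact le_trans (abs_nonneg (d i)) (Finset.le_sup' (fun i => |d i|) (Finset.mem_univ i))
    have hble : ‖Matrix.diagonal d‖ ≤ c :=
      diag_l2_norm_le d hc_nonneg (fun i => Finset.le_sup' (fun i => |d i|) (Finset.mem_univ i))
    linarith
end

section
/- For a symmetric positive definite matrix S with minimum eigenvalue σ_min and maximum eigenvalue σ_max, the choice ρ* = 1/√(σ_min σ_max) minimizes over ρ > 0 the quantity max{|1 − 2·ρσ_min/(1+ρσ_min)|, |1 − 2·ρσ_max/(1+ρσ_max)|}. -/
open Matrix

/-- For a symmetric positive definite `S` with extreme eigenvalues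
`σmin, σmax`, the choice `ρ* = 1/√(σmin σmax)` minimizes over `ρ > 0` the
convergence factor `max{|1 − 2ρσmin/(1+ρσmin)|, |1 − 2ρσmax/(1+ρσmax)|}`. -/
theorem optimal_penalty_parameter {r : ℕ} (S : Matrix (Fin r) (Fin r) ℝ)
    (hS : S.PosDef) (σmin σmax : ℝ)
    (hmin : IsLeast (spectrum ℝ S) σmin) (hmax : IsGreatest (spectrum ℝ S) σmax) :
    ∀ F : ℝ → ℝ,
    (F = fun ρ => max |1 - 2 * (ρ * σmin / (1 + ρ * σmin))|
                     |1 - 2 * (ρ * σmax / (1 + ρ * σmax))|) →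
    ∀ ρstar : ℝ, ρstar = 1 / Real.sqrt (σmin * σmax) →
    ∀ ρ : ℝ, 0 < ρ → F ρstar ≤ F ρ := by
  intro F hF ρs hρs ρ hρ
  -- positivity of σmin
  have ha : 0 < σmin := by
    have h1 := hmin.1
    rw [Matrix.IsHermitian.spectrum_real_eq_range_eigenvalues hS.isHermitian] at h1
    obtain ⟨i, hi⟩ := h1
    rw [← hi]
    exact hS.eigenvalues_pos i
  have hab : σmin ≤ σmax := hmax.2 hmin.1
  have hb : 0 < σmax := lt_of_lt_of_le ha hab
  set s := Real.sqrt (σmin * σmax) with hsdef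
  have hs0 : 0 < s := Real.sqrt_pos.2 (by positivity)
  have hs2 : s ^ 2 = σmin * σmax := Real.sq_sqrt (by positivity)
  have has : σmin ≤ s := by nlinarith
  have hsb : s ≤ σmax := by nlinarith
  subst hF hρs
  simp only
  set v : ℝ := (s - σmin) / (s + σmin) with hv
  have hv0 : 0 ≤ v := div_nonneg (by linarith) (by linarith)
  -- denominators
  have d1 : (0:ℝ) < 1 + (1 / s) * σmin := by positivity
  have d2 : (0:ℝ) < 1 + (1 / s) * σmax := by positivity
  have da : (0:ℝ) < 1 + ρ * σmin := by positivity
  have db : (0:ℝ) < 1 + ρ * σmax := by positivity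
  -- value at ρstar
  have e1 : 1 - 2 * ((1 / s) * σmin / (1 + (1 / s) * σmin)) = v := by
    rw [hv]
    field_simp
    ring
  have e2 : 1 - 2 * ((1 / s) * σmax / (1 + (1 / s) * σmax)) = -v := by
    have e2' : 1 - 2 * ((1 / s) * σmax / (1 + (1 / s) * σmax)) = (s - σmax) / (s + σmax) := by
      field_simp
      ring
    rw [e2', hv, ← neg_div, div_eq_div_iff (by linarith) (by linarith)]
    linear_combination 2 * hs2
  have hFstar : max |1 - 2 * ((1 / s) * σmin / (1 + (1 / s) * σmin))|
      |1 - 2 * ((1 / s) * σmax / (1 + (1 / s) * σmax))| = v := by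
    rw [e1, e2, abs_neg, max_self, abs_of_nonneg hv0]
  rw [hFstar]
  rcases le_total ρ (1 / s) with hc | hc
  · refine le_trans ?_ (le_max_left _ _)
    refine le_trans ?_ (le_abs_self _)
    have h1 : 1 - 2 * (ρ * σmin / (1 + ρ * σmin)) = (1 - ρ * σmin) / (1 + ρ * σmin) := by
      field_simp
      ring
    rw [h1, hv, div_le_div_iff₀ (by linarith) da]
    have hρs1 : ρ * s ≤ 1 := by
      rw [le_div_iff₀ hs0] at hc; linarith
    nlinarith [mul_pos hρ ha]
  · refine le_trans ?_ (le_max_right _ _)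
    refine le_trans ?_ (neg_le_abs _)
    have h1 : -(1 - 2 * (ρ * σmax / (1 + ρ * σmax))) = (ρ * σmax - 1) / (1 + ρ * σmax) := by
      field_simp
      ring
    rw [h1, hv, div_le_div_iff₀ (by linarith) db]
    have hρs1 : 1 ≤ ρ * s := by
      rw [div_le_iff₀ hs0] at hc; linarith
    nlinarith [mul_pos hρ hb]
end
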